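/- Let β > 0 and a, b ∈ ℝ, and define the signed power ⌊x⌉^β := |x|^β·sgn(x) with sgn(x) = x/|x| for x ≠ 0 and sgn(0) = 0. Then b·⌊a⌉^β ≤ (|b|^{β+1} + β·|a|^{β+1})/(β+1), with equality if and only if a = b. Equivalently, ∫_a^b (⌊s⌉^β - ⌊a⌉^β) ds ≥ 0 with equality if and only if a = b. -/

import Mathlib

/-- Signed power `⌊x⌉^a = |x|^a · sgn(x)` with `sgn(x) = x/|x|` for `x ≠ 0`
and `sgn(0) = 0` (here `Real.sign` has exactly these values). -/
noncomputable def spow (x a : ℝ) : ℝ := |x| ^ a * Real.sign x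

open Set intervalIntegral

lemma spow_zero' {a : ℝ} : spow 0 a = 0 := by simp [spow, Real.sign_zero]

lemma spow_of_pos {x : ℝ} (hx : 0 < x) (a : ℝ) : spow x a = x ^ a := by
  simp [spow, abs_of_pos hx, Real.sign_of_pos hx]

lemma spow_of_nonneg {x : ℝ} (hx : 0 ≤ x) {a : ℝ} (ha : a ≠ 0) : spow x a = x ^ a := by
  rcases hx.eq_or_lt with h | h
  · rw [← h, spow_zero', Real.zero_rpow ha]
  · exact spow_of_pos h a

lemma spow_neg' (x a : ℝ) : spow (-x) a = - spow x a := by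
  simp [spow, Real.sign_neg, mul_neg]

lemma spow_strictMono {β : ℝ} (hβ : 0 < β) : StrictMono (fun s => spow s β) := by
  have hpos : ∀ x : ℝ, 0 < x → 0 < spow x β := fun x hx => by
    rw [spow_of_pos hx]; exact Real.rpow_pos_of_pos hx β
  intro x y hxy
  simp only
  rcases le_or_gt 0 x with hx | hx
  · rw [spow_of_nonneg hx hβ.ne', spow_of_nonneg (hx.trans hxy.le) hβ.ne']
    exact Real.rpow_lt_rpow hx hxy hβ
  · have hxv : spow x β = - spow (-x) β := by
      rw [← spow_neg', neg_neg]
    rcases le_or_gt 0 y with hy | hy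
    · have h1 : 0 < spow (-x) β := hpos _ (by linarith)
      have h2 : 0 ≤ spow y β := by
        rcases hy.eq_or_lt with h | h
        · rw [← h, spow_zero']
        · exact (hpos _ h).le
      linarith [hxv]
    · have hyv : spow y β = - spow (-y) β := by
        rw [← spow_neg', neg_neg]
      have : spow (-y) β < spow (-x) β := by
        rw [spow_of_pos (by linarith : (0:ℝ) < -y), spow_of_pos (by linarith : (0:ℝ) < -x)]
        exact Real.rpow_lt_rpow (by linarith) (by linarith) hβ
      linarith

lemma hasDerivAt_absPow {β : ℝ} (hβ : 0 < β) (x : ℝ) :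
    HasDerivAt (fun t : ℝ => |t| ^ (β + 1) / (β + 1)) (spow x β) x := by
  have hβ1 : (0:ℝ) < β + 1 := by linarith
  rcases lt_trichotomy x 0 with hx | hx | hx
  · have h1 : HasDerivAt (fun t : ℝ => -t) (-1) x := (hasDerivAt_id x).neg
    have h2 : HasDerivAt (fun u : ℝ => u ^ (β + 1)) ((β + 1) * (-x) ^ β) (-x) := by
      have := Real.hasDerivAt_rpow_const (x := -x) (p := β + 1) (Or.inl (by linarith))
      simpa using this
    have h3 := (h2.comp x h1).div_const (β + 1)
    have h4 : (fun t : ℝ => (-t) ^ (β + 1) / (β + 1)) =ᶠ[nhds x]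
        (fun t : ℝ => |t| ^ (β + 1) / (β + 1)) := by
      filter_upwards [Iio_mem_nhds hx] with t ht
      rw [abs_of_neg ht]
    have h5 := h3.congr_of_eventuallyEq h4.symm
    refine h5.congr_deriv (Eq.symm ?_)
    rw [spow]
    rw [abs_of_neg hx, Real.sign_of_neg hx]
    field_simp
  · subst hx
    rw [spow_zero']
    rw [hasDerivAt_iff_tendsto_slope]
    have hb : ∀ t : ℝ, t ≠ 0 →
        ‖slope (fun t : ℝ => |t| ^ (β + 1) / (β + 1)) 0 t‖ ≤ |t| ^ β / (β + 1) := by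
      intro t ht
      have h0 : |t| ≠ 0 := abs_ne_zero.mpr ht
      rw [slope_def_field]
      simp only [abs_zero, Real.zero_rpow hβ1.ne', zero_div, sub_zero]
      rw [div_div, Real.rpow_add_one h0, Real.norm_eq_abs, abs_div, abs_mul,
        abs_of_nonneg (Real.rpow_nonneg (abs_nonneg t) β), abs_abs, abs_mul,
        abs_of_pos hβ1]
      have heq : |t| ^ β * |t| / ((β + 1) * |t|) = |t| ^ β / (β + 1) := by
        field_simp
      exact le_of_eq heq
    have hg : Filter.Tendsto (fun t : ℝ => |t| ^ β / (β + 1)) (nhds 0) (nhds 0) := by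
      have h1 : Filter.Tendsto (fun t : ℝ => |t|) (nhds 0) (nhds 0) := by
        simpa using continuous_abs.tendsto (0:ℝ)
      have h2 : Filter.Tendsto (fun u : ℝ => u ^ β) (nhds 0) (nhds ((0:ℝ) ^ β)) :=
        (Real.continuousAt_rpow_const 0 β (Or.inr hβ.le)).tendsto
      rw [Real.zero_rpow hβ.ne'] at h2
      have := (h2.comp h1).div_const (β + 1)
      simpa using this
    apply squeeze_zero_norm' _ (hg.mono_left nhdsWithin_le_nhds)
    filter_upwards [self_mem_nhdsWithin] with t ht
    exact hb t ht
  · have h2 : HasDerivAt (fun u : ℝ => u ^ (β + 1)) ((β + 1) * x ^ β) x := by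
      have := Real.hasDerivAt_rpow_const (x := x) (p := β + 1) (Or.inl hx.ne')
      simpa using this
    have h3 := h2.div_const (β + 1)
    have h4 : (fun t : ℝ => t ^ (β + 1) / (β + 1)) =ᶠ[nhds x]
        (fun t : ℝ => |t| ^ (β + 1) / (β + 1)) := by
      filter_upwards [Ioi_mem_nhds hx] with t ht
      rw [abs_of_pos ht]
    have h5 := h3.congr_of_eventuallyEq h4.symm
    refine h5.congr_deriv (Eq.symm ?_)
    rw [spow_of_pos hx]
    field_simp

lemma self_mul_spow {β : ℝ} (hβ : 0 < β) (a : ℝ) : a * spow a β = |a| ^ (β + 1) := by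
  rcases eq_or_ne a 0 with h | h
  · rw [h, spow_zero', mul_zero, abs_zero, Real.zero_rpow (by linarith)]
  · have hsa : Real.sign a * a = |a| := by
      rcases h.lt_or_gt with h' | h'
      · rw [Real.sign_of_neg h', abs_of_neg h']; ring
      · rw [Real.sign_of_pos h', abs_of_pos h']; ring
    rw [spow, Real.rpow_add_one (abs_ne_zero.mpr h)]
    calc a * (|a| ^ β * Real.sign a) = |a| ^ β * (Real.sign a * a) := by ring
    _ = |a| ^ β * |a| := by rw [hsa]

theorem stmt_15
    (β a b : ℝ) (hβ : 0 < β) :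
    (b * spow a β ≤ (|b| ^ (β + 1) + β * |a| ^ (β + 1)) / (β + 1)) ∧
    (b * spow a β = (|b| ^ (β + 1) + β * |a| ^ (β + 1)) / (β + 1) ↔ a = b) ∧
    (0 ≤ ∫ s in a..b, (spow s β - spow a β)) ∧
    ((∫ s in a..b, (spow s β - spow a β)) = 0 ↔ a = b) := by
  have hβ1 : (0:ℝ) < β + 1 := by linarith
  have hmono := spow_strictMono hβ
  have hint0 : ∀ u v : ℝ, IntervalIntegrable (fun s => spow s β) MeasureTheory.volume u v :=
    fun u v => hmono.monotone.intervalIntegrable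
  have hint : ∀ u v : ℝ, IntervalIntegrable (fun s => spow s β - spow a β)
      MeasureTheory.volume u v :=
    fun u v => (hint0 u v).sub intervalIntegrable_const
  have hFTC : ∫ s in a..b, spow s β
      = |b| ^ (β + 1) / (β + 1) - |a| ^ (β + 1) / (β + 1) :=
    intervalIntegral.integral_eq_sub_of_hasDerivAt
      (fun x _ => hasDerivAt_absPow hβ x) (hint0 a b)
  have key : (∫ s in a..b, (spow s β - spow a β))
      = (|b| ^ (β + 1) + β * |a| ^ (β + 1)) / (β + 1) - b * spow a β := by
    rw [intervalIntegral.integral_sub (hint0 a b) intervalIntegrable_const, hFTC,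
      intervalIntegral.integral_const, smul_eq_mul]
    have hma := self_mul_spow hβ a
    field_simp
    linear_combination (β + 1) * hma
  have hpos : a ≠ b → 0 < ∫ s in a..b, (spow s β - spow a β) := by
    intro hab
    rcases hab.lt_or_gt with h | h
    · exact intervalIntegral_pos_of_pos_on (hint a b)
        (fun x hx => sub_pos.2 (hmono hx.1)) h
    · have h2 : 0 < ∫ s in b..a, -(spow s β - spow a β) :=
        intervalIntegral_pos_of_pos_on ((hint b a).neg)
          (fun x hx => by simpa using (hmono hx.2)) h
      rw [intervalIntegral.integral_neg] at h2
      rw [intervalIntegral.integral_symm b a]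
      linarith
  have hzero : a = b → (∫ s in a..b, (spow s β - spow a β)) = 0 := by
    intro h; rw [h, intervalIntegral.integral_same]
  have hnn : 0 ≤ ∫ s in a..b, (spow s β - spow a β) := by
    rcases eq_or_ne a b with h | h
    · rw [hzero h]
    · exact (hpos h).le
  have hiff : (∫ s in a..b, (spow s β - spow a β)) = 0 ↔ a = b :=
    ⟨fun h0 => by_contra fun h => (hpos h).ne' h0, hzero⟩
  refine ⟨by linarith [key ▸ hnn], ?_, hnn, hiff⟩
  constructor
  · intro h
    apply hiff.mp
    rw [key, h, sub_self]
  · intro h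
    have := hzero h
    rw [key] at this
    linarith
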